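/- Let a continuous-time query algorithm of duration T be given as in the context, and define the Gram matrices ρ_{x,y} = ⟨φ_x(0)|φ_y(0)⟩ and σ_{x,y} = ⟨φ_x(T)|φ_y(T)⟩ of the initial and final states. Then for every Hermitian 𝕏×𝕏 matrix Γ satisfying ‖Γ∘Δ_j‖ ≤ 1 for all j ∈ {1,…,n}, and every unit vector v ∈ ℂ^𝕏, one has |⟨Γ∘(σ−ρ), vv*⟩| ≤ 2T, where ⟨A,B⟩ = tr(A*B). (Consequently the duration of any exact continuous-time conversion of ρ to σ is at least half the adversary bound Adv*(ρ,σ).) -/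

import Mathlib

open scoped Matrix ComplexConjugate

/-- The operator (spectral) norm of a complex matrix. -/
noncomputable def matOpNorm {m : Type*} [Fintype m] [DecidableEq m]
    (M : Matrix m m ℂ) : ℝ :=
  ‖Matrix.toEuclideanCLM (𝕜 := ℂ) M‖

/-- The adversary constraint matrix `Δ_j`, with entries `(Δ_j)_{x,y} = 1 - δ_{x_j,y_j}`. -/
def Delta {X Al : Type*} [DecidableEq Al] {n : ℕ} (inp : X → Fin n → Al) (j : Fin n) :
    Matrix X X ℂ :=
  fun x y => if inp x j = inp y j then 0 else 1

/-- The oracle Hamiltonian `H_Q(x) = ∑_j |j⟩⟨j| ⊗ h(x_j) ⊗ I_W` as a matrix on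
`ℂ^n ⊗ ℂ^{Σ∪{0̄}} ⊗ H_W`, where the blank symbol `0̄` is `Option.none`. -/
def oracleHam {X Al W : Type*} {n : ℕ} [DecidableEq Al] [DecidableEq W]
    (inp : X → Fin n → Al) (h : Al → Matrix (Option Al) (Option Al) ℂ) (x : X) :
    Matrix (Fin n × Option Al × W) (Fin n × Option Al × W) ℂ :=
  fun p q =>
    if p.1 = q.1 ∧ p.2.2 = q.2.2 then h (inp x p.1) p.2.1 q.2.1 else 0

section aux
variable {ι : Type*} [Fintype ι] [DecidableEq ι]

lemma euc_norm_sq (x : EuclideanSpace ℂ ι) : ‖x‖ ^ 2 = ∑ i, ‖x i‖ ^ 2 := by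
  rw [EuclideanSpace.norm_eq, Real.sq_sqrt]; positivity

lemma euc_inner_eq (x y : EuclideanSpace ℂ ι) : inner ℂ x y = ∑ i, conj (x i) * (y i) := by
  simp [PiLp.inner_apply, RCLike.inner_apply, mul_comm]

lemma clm_apply (M : Matrix ι ι ℂ) (x : EuclideanSpace ℂ ι) (i : ι) :
    (Matrix.toEuclideanCLM (𝕜 := ℂ) M x) i = ∑ j, M i j * x j := rfl

lemma clm_norm_le (M : Matrix ι ι ℂ) (x : EuclideanSpace ℂ ι) :
    ‖Matrix.toEuclideanCLM (𝕜 := ℂ) M x‖ ≤ matOpNorm M * ‖x‖ :=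
  (Matrix.toEuclideanCLM (𝕜 := ℂ) M).le_opNorm x

lemma herm_swap {M : Matrix ι ι ℂ} (hM : M.IsHermitian) (u w : EuclideanSpace ℂ ι) :
    (inner ℂ (Matrix.toEuclideanCLM (𝕜 := ℂ) M u) w : ℂ)
      = inner ℂ u (Matrix.toEuclideanCLM (𝕜 := ℂ) M w) :=
  (Matrix.isHermitian_iff_isSymmetric.mp hM) u w

lemma sum_le_sqrt_mul_sqrt {κ : Type*} [Fintype κ] (f g : κ → ℝ)
    (hf : ∀ i, 0 ≤ f i) (hg : ∀ i, 0 ≤ g i) :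
    ∑ i, f i * g i ≤ Real.sqrt (∑ i, f i ^ 2) * Real.sqrt (∑ i, g i ^ 2) := by
  have h := Finset.sum_mul_sq_le_sq_mul_sq Finset.univ f g
  have h0 : (0:ℝ) ≤ ∑ i, f i * g i := Finset.sum_nonneg fun i _ => mul_nonneg (hf i) (hg i)
  calc ∑ i, f i * g i = Real.sqrt ((∑ i, f i * g i) ^ 2) := (Real.sqrt_sq h0).symm
    _ ≤ Real.sqrt ((∑ i, f i ^ 2) * (∑ i, g i ^ 2)) := Real.sqrt_le_sqrt h
    _ = _ := Real.sqrt_mul (by positivity) _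

lemma key_bilinear {X : Type*} [Fintype X] [DecidableEq X] {κ : Type*} [Fintype κ]
    (M : Matrix X X ℂ) (a b : X → EuclideanSpace ℂ κ) :
    ‖∑ x, ∑ y, M x y * inner ℂ (a x) (b y)‖ ≤
      matOpNorm M * (Real.sqrt (∑ x, ‖a x‖ ^ 2) * Real.sqrt (∑ y, ‖b y‖ ^ 2)) := by
  classical
  set A : κ → EuclideanSpace ℂ X := fun k => WithLp.toLp 2 (fun x => a x k) with hA
  set B : κ → EuclideanSpace ℂ X := fun k => WithLp.toLp 2 (fun y => b y k) with hB
  have step : (∑ x, ∑ y, M x y * inner ℂ (a x) (b y))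
      = ∑ k, (inner ℂ (A k) (Matrix.toEuclideanCLM (𝕜 := ℂ) M (B k)) : ℂ) := by
    have L : (∑ x, ∑ y, M x y * (inner ℂ (a x) (b y) : ℂ))
        = ∑ x, ∑ y, ∑ k, M x y * (conj (a x k) * b y k) := by
      simp only [euc_inner_eq, Finset.mul_sum]
    have R : (∑ k, (inner ℂ (A k) (Matrix.toEuclideanCLM (𝕜 := ℂ) M (B k)) : ℂ))
        = ∑ k, ∑ x, ∑ y, M x y * (conj (a x k) * b y k) := by
      refine Finset.sum_congr rfl fun k _ => ?_
      simp only [euc_inner_eq, clm_apply, Finset.mul_sum]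
      exact Finset.sum_congr rfl fun x _ => Finset.sum_congr rfl fun y _ => by ring
    rw [L, R]
    conv_rhs => rw [Finset.sum_comm]
    exact Finset.sum_congr rfl fun x _ => Finset.sum_comm
  have hAk : ∑ k, ‖A k‖ ^ 2 = ∑ x, ‖a x‖ ^ 2 := by
    simp only [euc_norm_sq]; exact Finset.sum_comm
  have hBk : ∑ k, ‖B k‖ ^ 2 = ∑ y, ‖b y‖ ^ 2 := by
    simp only [euc_norm_sq]; exact Finset.sum_comm
  rw [step, ← hAk, ← hBk]
  calc ‖∑ k, (inner ℂ (A k) (Matrix.toEuclideanCLM (𝕜 := ℂ) M (B k)) : ℂ)‖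
      ≤ ∑ k, ‖(inner ℂ (A k) (Matrix.toEuclideanCLM (𝕜 := ℂ) M (B k)) : ℂ)‖ := by
        simpa using
          norm_sum_le (E := ℂ) Finset.univ
            (fun k => (inner ℂ (A k) (Matrix.toEuclideanCLM (𝕜 := ℂ) M (B k)) : ℂ))
    _ ≤ ∑ k, ‖A k‖ * (matOpNorm M * ‖B k‖) := by
        refine Finset.sum_le_sum fun k _ => ?_
        refine le_trans (norm_inner_le_norm (𝕜 := ℂ) _ _) ?_
        exact mul_le_mul_of_nonneg_left (clm_norm_le M (B k)) (norm_nonneg _)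
    _ = matOpNorm M * ∑ k, ‖A k‖ * ‖B k‖ := by
        rw [Finset.mul_sum]; refine Finset.sum_congr rfl fun k _ => by ring
    _ ≤ matOpNorm M * (Real.sqrt (∑ k, ‖A k‖ ^ 2) * Real.sqrt (∑ k, ‖B k‖ ^ 2)) := by
        refine mul_le_mul_of_nonneg_left ?_ (norm_nonneg _)
        exact sum_le_sqrt_mul_sqrt _ _ (fun k => norm_nonneg _) (fun k => norm_nonneg _)
end aux

section blocks
variable {Al W : Type*} [Fintype Al] [DecidableEq Al] [Fintype W] [DecidableEq W] {n : ℕ}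

/-- the `j`-th block of a vector -/
def blk (j : Fin n) (u : EuclideanSpace ℂ (Fin n × Option Al × W)) :
    EuclideanSpace ℂ (Option Al × W) :=
  WithLp.toLp 2 (fun cw : Option Al × W => u (j, cw.1, cw.2))

/-- `M ⊗ I_W` applied to a block vector -/
noncomputable def app (M : Matrix (Option Al) (Option Al) ℂ)
    (u : EuclideanSpace ℂ (Option Al × W)) : EuclideanSpace ℂ (Option Al × W) :=
  WithLp.toLp 2 (fun cw : Option Al × W => ∑ c', M cw.1 c' * u (c', cw.2))

lemma oracle_clm_apply {X : Type*} (inp : X → Fin n → Al)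
    (h : Al → Matrix (Option Al) (Option Al) ℂ) (z : X)
    (w : EuclideanSpace ℂ (Fin n × Option Al × W)) (p : Fin n × Option Al × W) :
    (Matrix.toEuclideanCLM (𝕜 := ℂ) (oracleHam inp h z) w) p
      = ∑ c', h (inp z p.1) p.2.1 c' * w (p.1, c', p.2.2) := by
  rw [clm_apply]
  rw [Fintype.sum_prod_type]
  rw [Finset.sum_eq_single p.1]
  · simp only [oracleHam, Fintype.sum_prod_type]
    refine Finset.sum_congr rfl fun c' _ => ?_
    rw [Finset.sum_eq_single p.2.2]
    · simp
    · intro w' _ hw'; simp [Ne.symm hw']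
    · simp
  · intro j _ hj
    simp only [oracleHam]
    refine Finset.sum_eq_zero fun q _ => ?_
    simp [Ne.symm hj, hj]
  · simp

lemma inner_oracle {X : Type*} (inp : X → Fin n → Al)
    (h : Al → Matrix (Option Al) (Option Al) ℂ) (z : X)
    (u w : EuclideanSpace ℂ (Fin n × Option Al × W)) :
    (inner ℂ u (Matrix.toEuclideanCLM (𝕜 := ℂ) (oracleHam inp h z) w) : ℂ)
      = ∑ j, (inner ℂ (blk j u) (app (h (inp z j)) (blk j w)) : ℂ) := by
  simp only [euc_inner_eq, oracle_clm_apply, blk, app]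
  rw [Fintype.sum_prod_type]

lemma app_herm_swap {M : Matrix (Option Al) (Option Al) ℂ} (hM : M.IsHermitian)
    (u w : EuclideanSpace ℂ (Option Al × W)) :
    (inner ℂ (app M u) w : ℂ) = inner ℂ u (app M w) := by
  have L : (inner ℂ (app M u) w : ℂ)
      = ∑ c, ∑ w', ∑ c', M c' c * (conj (u (c', w')) * w (c, w')) := by
    simp only [euc_inner_eq, app]
    rw [Fintype.sum_prod_type]
    refine Finset.sum_congr rfl fun c _ => Finset.sum_congr rfl fun w' _ => ?_
    rw [map_sum, Finset.sum_mul]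
    refine Finset.sum_congr rfl fun c' _ => ?_
    rw [map_mul]
    have : (starRingEnd ℂ) (M c c') = M c' c := hM.apply c' c
    rw [this]; ring
  have R : (inner ℂ u (app M w) : ℂ)
      = ∑ c', ∑ w', ∑ c, M c' c * (conj (u (c', w')) * w (c, w')) := by
    simp only [euc_inner_eq, app]
    rw [Fintype.sum_prod_type]
    refine Finset.sum_congr rfl fun c' _ => Finset.sum_congr rfl fun w' _ => ?_
    rw [Finset.mul_sum]
    exact Finset.sum_congr rfl fun c _ => by ring
  rw [L, R]
  rw [Finset.sum_comm]
  conv_rhs => rw [Finset.sum_comm]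
  exact Finset.sum_congr rfl fun w' _ => Finset.sum_comm

lemma app_norm_le (M : Matrix (Option Al) (Option Al) ℂ)
    (u : EuclideanSpace ℂ (Option Al × W)) :
    ‖(app M u : EuclideanSpace ℂ (Option Al × W))‖ ≤ matOpNorm M * ‖u‖ := by
  have key : ∀ w' : W,
      ∑ c, ‖(app M u : EuclideanSpace ℂ (Option Al × W)) (c, w')‖ ^ 2
        ≤ matOpNorm M ^ 2 * ∑ c, ‖u (c, w')‖ ^ 2 := by
    intro w'
    let v : EuclideanSpace ℂ (Option Al) := WithLp.toLp 2 (fun c' => u (c', w'))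
    have h2 : ∑ c, ‖(app M u : EuclideanSpace ℂ (Option Al × W)) (c, w')‖ ^ 2
        = ‖Matrix.toEuclideanCLM (𝕜 := ℂ) M v‖ ^ 2 := by
      rw [euc_norm_sq]
      exact Finset.sum_congr rfl fun c _ => rfl
    have h3 : ‖Matrix.toEuclideanCLM (𝕜 := ℂ) M v‖ ^ 2 ≤ (matOpNorm M * ‖v‖) ^ 2 :=
      pow_le_pow_left₀ (norm_nonneg _) (clm_norm_le M v) 2
    have h4 : ‖v‖ ^ 2 = ∑ c, ‖u (c, w')‖ ^ 2 := by rw [euc_norm_sq]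
    rw [h2]
    refine h3.trans_eq ?_
    rw [mul_pow, h4]
  have hsq : ‖(app M u : EuclideanSpace ℂ (Option Al × W))‖ ^ 2
      ≤ (matOpNorm M * ‖u‖) ^ 2 := by
    rw [euc_norm_sq, mul_pow, euc_norm_sq]
    calc ∑ cw : Option Al × W, ‖(app M u : EuclideanSpace ℂ (Option Al × W)) cw‖ ^ 2
        = ∑ w', ∑ c, ‖(app M u : EuclideanSpace ℂ (Option Al × W)) (c, w')‖ ^ 2 := by
          rw [Fintype.sum_prod_type]; exact Finset.sum_comm
      _ ≤ ∑ w', matOpNorm M ^ 2 * ∑ c, ‖u (c, w')‖ ^ 2 := Finset.sum_le_sum fun w' _ => key w'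
      _ = matOpNorm M ^ 2 * ∑ cw : Option Al × W, ‖u cw‖ ^ 2 := by
          rw [← Finset.mul_sum]
          congr 1
          rw [Fintype.sum_prod_type]
          exact Finset.sum_comm
  have h0 : (0:ℝ) ≤ matOpNorm M * ‖u‖ := mul_nonneg (norm_nonneg _) (norm_nonneg _)
  have := Real.sqrt_le_sqrt hsq
  rwa [Real.sqrt_sq (norm_nonneg _), Real.sqrt_sq h0] at this

lemma sum_blk_norm_sq (u : EuclideanSpace ℂ (Fin n × Option Al × W)) :
    ∑ j, ‖(blk j u : EuclideanSpace ℂ (Option Al × W))‖ ^ 2 = ‖u‖ ^ 2 := by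
  simp only [euc_norm_sq, blk]
  rw [Fintype.sum_prod_type]

end blocks

section main
variable {Al W : Type*} [Fintype Al] [DecidableEq Al] [Fintype W] [DecidableEq W] {n : ℕ}
variable {X : Type*} [Fintype X] [DecidableEq X]

lemma abs_bigsum_le (inp : X → Fin n → Al)
    (h : Al → Matrix (Option Al) (Option Al) ℂ)
    (hherm : ∀ y, (h y).IsHermitian) (hbound : ∀ y, matOpNorm (h y) ≤ 1)
    (Γ : Matrix X X ℂ) (hΓ : ∀ j : Fin n, matOpNorm (Γ ⊙ Delta inp j) ≤ 1)
    (χ : X → EuclideanSpace ℂ (Fin n × Option Al × W)) (hχ : ∑ x, ‖χ x‖ ^ 2 = 1) :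
    ‖∑ x, ∑ y, Γ x y *
      ((inner ℂ (χ x) (Matrix.toEuclideanCLM (𝕜 := ℂ) (oracleHam inp h x) (χ y)) : ℂ) -
       (inner ℂ (χ x) (Matrix.toEuclideanCLM (𝕜 := ℂ) (oracleHam inp h y) (χ y)) : ℂ))‖ ≤ 2 := by
  classical
  -- rewrite the double sum as a sum over j of two bilinear forms
  have entry : ∀ x y, Γ x y *
      ((inner ℂ (χ x) (Matrix.toEuclideanCLM (𝕜 := ℂ) (oracleHam inp h x) (χ y)) : ℂ) -
       (inner ℂ (χ x) (Matrix.toEuclideanCLM (𝕜 := ℂ) (oracleHam inp h y) (χ y)) : ℂ))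
      = ∑ j, ((Γ ⊙ Delta inp j) x y *
            (inner ℂ (app (h (inp x j)) (blk j (χ x))) (blk j (χ y)) : ℂ)
          - (Γ ⊙ Delta inp j) x y *
            (inner ℂ (blk j (χ x)) (app (h (inp y j)) (blk j (χ y))) : ℂ)) := by
    intro x y
    rw [inner_oracle, inner_oracle, ← Finset.sum_sub_distrib, Finset.mul_sum]
    refine Finset.sum_congr rfl fun j _ => ?_
    by_cases hxy : inp x j = inp y j
    · simp only [Matrix.hadamard_apply, Delta, if_pos hxy, mul_zero, zero_mul, hxy,
        app_herm_swap (hherm (inp y j)), sub_self]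
    · simp only [Matrix.hadamard_apply, Delta, if_neg hxy, mul_one,
        app_herm_swap (hherm (inp x j)), mul_sub]
  -- per-j quantities
  set Q : Fin n → ℝ := fun j => ∑ x, ‖(blk j (χ x) : EuclideanSpace ℂ (Option Al × W))‖ ^ 2 with hQ
  have hQnonneg : ∀ j, 0 ≤ Q j := fun j => Finset.sum_nonneg fun x _ => by positivity
  have hQsum : ∑ j, Q j = 1 := by
    rw [hQ]
    rw [Finset.sum_comm]
    rw [← hχ]
    exact Finset.sum_congr rfl fun x _ => sum_blk_norm_sq (χ x)
  have ha : ∀ (j : Fin n) (x : X),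
      ‖(app (h (inp x j)) (blk j (χ x)) : EuclideanSpace ℂ (Option Al × W))‖ ^ 2
        ≤ ‖(blk j (χ x) : EuclideanSpace ℂ (Option Al × W))‖ ^ 2 := by
    intro j x
    refine pow_le_pow_left₀ (norm_nonneg _) ?_ 2
    refine (app_norm_le _ _).trans ?_
    exact mul_le_of_le_one_left (norm_nonneg _) (hbound _)
  have hsqrtQ : ∀ j : Fin n, Real.sqrt (Q j) * Real.sqrt (Q j) = Q j :=
    fun j => Real.mul_self_sqrt (hQnonneg j)
  have hS1 : ∀ j : Fin n,
      ‖∑ x, ∑ y, (Γ ⊙ Delta inp j) x y *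
        (inner ℂ (app (h (inp x j)) (blk j (χ x))) (blk j (χ y)) : ℂ)‖ ≤ Q j := by
    intro j
    refine (key_bilinear (Γ ⊙ Delta inp j)
      (fun x => app (h (inp x j)) (blk j (χ x))) (fun y => blk j (χ y))).trans ?_
    have h1 : Real.sqrt (∑ x, ‖(app (h (inp x j)) (blk j (χ x)) :
        EuclideanSpace ℂ (Option Al × W))‖ ^ 2) ≤ Real.sqrt (Q j) :=
      Real.sqrt_le_sqrt (Finset.sum_le_sum fun x _ => ha j x)
    calc matOpNorm (Γ ⊙ Delta inp j) * _ ≤ 1 * (Real.sqrt (Q j) * Real.sqrt (Q j)) := by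
          refine mul_le_mul (hΓ j) ?_ (by positivity) zero_le_one
          exact mul_le_mul_of_nonneg_right h1 (Real.sqrt_nonneg _)
      _ = Q j := by rw [one_mul, hsqrtQ j]
  have hS2 : ∀ j : Fin n,
      ‖∑ x, ∑ y, (Γ ⊙ Delta inp j) x y *
        (inner ℂ (blk j (χ x)) (app (h (inp y j)) (blk j (χ y))) : ℂ)‖ ≤ Q j := by
    intro j
    refine (key_bilinear (Γ ⊙ Delta inp j)
      (fun x => blk j (χ x)) (fun y => app (h (inp y j)) (blk j (χ y)))).trans ?_
    have h1 : Real.sqrt (∑ y, ‖(app (h (inp y j)) (blk j (χ y)) :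
        EuclideanSpace ℂ (Option Al × W))‖ ^ 2) ≤ Real.sqrt (Q j) :=
      Real.sqrt_le_sqrt (Finset.sum_le_sum fun y _ => ha j y)
    calc matOpNorm (Γ ⊙ Delta inp j) * _ ≤ 1 * (Real.sqrt (Q j) * Real.sqrt (Q j)) := by
          refine mul_le_mul (hΓ j) ?_ (by positivity) zero_le_one
          exact mul_le_mul_of_nonneg_left h1 (Real.sqrt_nonneg _)
      _ = Q j := by rw [one_mul, hsqrtQ j]
  have split : (∑ x, ∑ y, Γ x y *
      ((inner ℂ (χ x) (Matrix.toEuclideanCLM (𝕜 := ℂ) (oracleHam inp h x) (χ y)) : ℂ) -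
       (inner ℂ (χ x) (Matrix.toEuclideanCLM (𝕜 := ℂ) (oracleHam inp h y) (χ y)) : ℂ)))
      = ∑ j, ((∑ x, ∑ y, (Γ ⊙ Delta inp j) x y *
            (inner ℂ (app (h (inp x j)) (blk j (χ x))) (blk j (χ y)) : ℂ))
        - (∑ x, ∑ y, (Γ ⊙ Delta inp j) x y *
            (inner ℂ (blk j (χ x)) (app (h (inp y j)) (blk j (χ y))) : ℂ))) := by
    calc (∑ x, ∑ y, Γ x y * (_ - _))
        = ∑ x, ∑ y, ∑ j, ((Γ ⊙ Delta inp j) x y *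
            (inner ℂ (app (h (inp x j)) (blk j (χ x))) (blk j (χ y)) : ℂ)
          - (Γ ⊙ Delta inp j) x y *
            (inner ℂ (blk j (χ x)) (app (h (inp y j)) (blk j (χ y))) : ℂ)) :=
          Finset.sum_congr rfl fun x _ => Finset.sum_congr rfl fun y _ => entry x y
      _ = ∑ x, ∑ j, ∑ y, _ := Finset.sum_congr rfl fun x _ => Finset.sum_comm
      _ = ∑ j, ∑ x, ∑ y, _ := Finset.sum_comm
      _ = _ := by
          refine Finset.sum_congr rfl fun j _ => ?_
          rw [← Finset.sum_sub_distrib]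
          exact Finset.sum_congr rfl fun x _ => Finset.sum_sub_distrib _ _
  rw [split]
  have habs : ∀ (f : Fin n → ℂ), ‖∑ j, f j‖ ≤ ∑ j, ‖f j‖ :=
    fun f => by simpa using norm_sum_le (E := ℂ) Finset.univ f
  have habs2 : ∀ (A B : ℂ), ‖A - B‖ ≤ ‖A‖ + ‖B‖ :=
    fun A B => by simpa using norm_sub_le A B
  refine (habs _).trans ?_
  have : ∑ j, ‖_‖ ≤ ∑ j : Fin n, (Q j + Q j) :=
    Finset.sum_le_sum fun j _ => (habs2 _ _).trans (add_le_add (hS1 j) (hS2 j))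
  refine this.trans ?_
  have : ∑ j : Fin n, (Q j + Q j) = 2 * ∑ j, Q j := by
    rw [Finset.mul_sum]
    exact Finset.sum_congr rfl fun j _ => (two_mul _).symm
  rw [this, hQsum, mul_one]

end main

section herm2
variable {Al W : Type*} [Fintype Al] [DecidableEq Al] [Fintype W] [DecidableEq W] {n : ℕ}
variable {X : Type*}

lemma oracleHam_herm (inp : X → Fin n → Al) (h : Al → Matrix (Option Al) (Option Al) ℂ)
    (hherm : ∀ y, (h y).IsHermitian) (x : X) : (oracleHam (W := W) inp h x).IsHermitian := by
  refine Matrix.IsHermitian.ext fun p q => ?_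
  simp only [oracleHam]
  by_cases hc : p.1 = q.1 ∧ p.2.2 = q.2.2
  · rw [if_pos ⟨hc.1.symm, hc.2.symm⟩, if_pos hc, hc.1]
    exact (hherm (inp x q.1)).apply _ _
  · rw [if_neg fun hh => hc ⟨hh.1.symm, hh.2.symm⟩, if_neg hc, star_zero]

lemma per_pair (inp : X → Fin n → Al) (h : Al → Matrix (Option Al) (Option Al) ℂ)
    (hherm : ∀ y, (h y).IsHermitian)
    (HDt : Matrix (Fin n × Option Al × W) (Fin n × Option Al × W) ℂ)
    (hHDherm : HDt.IsHermitian) (a : ℝ)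
    (x y : X) (u w : EuclideanSpace ℂ (Fin n × Option Al × W)) :
    ((inner ℂ u ((-Complex.I) • (Matrix.toEuclideanCLM (𝕜 := ℂ)
        (HDt + (a : ℂ) • oracleHam inp h y) w)) : ℂ)
      + (inner ℂ ((-Complex.I) • (Matrix.toEuclideanCLM (𝕜 := ℂ)
        (HDt + (a : ℂ) • oracleHam inp h x) u)) w : ℂ))
    = Complex.I * (a : ℂ) *
        ((inner ℂ u (Matrix.toEuclideanCLM (𝕜 := ℂ) (oracleHam inp h x) w) : ℂ)
          - (inner ℂ u (Matrix.toEuclideanCLM (𝕜 := ℂ) (oracleHam inp h y) w) : ℂ)) := by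
  have e1 : (inner ℂ (Matrix.toEuclideanCLM (𝕜 := ℂ) HDt u) w : ℂ)
      = inner ℂ u (Matrix.toEuclideanCLM (𝕜 := ℂ) HDt w) := herm_swap hHDherm u w
  have e2 : (inner ℂ (Matrix.toEuclideanCLM (𝕜 := ℂ) (oracleHam inp h x) u) w : ℂ)
      = inner ℂ u (Matrix.toEuclideanCLM (𝕜 := ℂ) (oracleHam inp h x) w) :=
    herm_swap (oracleHam_herm inp h hherm x) u w
  simp only [map_add, map_smul, ContinuousLinearMap.add_apply, ContinuousLinearMap.smul_apply,
    inner_add_right, inner_add_left, inner_smul_left, inner_smul_right, map_neg, Complex.conj_I,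
    Complex.conj_ofReal, neg_neg, e1, e2]
  ring
end herm2

section analysis
variable {Al W : Type*} [Fintype Al] [DecidableEq Al] [Fintype W] [DecidableEq W] {n : ℕ}
variable {X : Type*} [Fintype X] [DecidableEq X]

lemma main_bound (inp : X → Fin n → Al) (T : ℝ) (hT : 0 ≤ T)
    (h : Al → Matrix (Option Al) (Option Al) ℂ)
    (hherm : ∀ y, (h y).IsHermitian) (hbnd : ∀ y, matOpNorm (h y) ≤ 1)
    (HD : ℝ → Matrix (Fin n × Option Al × W) (Fin n × Option Al × W) ℂ)
    (hHDherm : ∀ t, (HD t).IsHermitian)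
    (α : ℝ → ℝ) (hα : ∀ t ∈ Set.Icc 0 T, |α t| ≤ 1)
    (φ : X → ℝ → EuclideanSpace ℂ (Fin n × Option Al × W))
    (hunit : ∀ x, ∀ t ∈ Set.Icc 0 T, ‖φ x t‖ = 1)
    (hschro : ∀ x, ∀ t ∈ Set.Icc 0 T,
      HasDerivWithinAt (φ x)
        ((-Complex.I) •
          (Matrix.toEuclideanCLM (𝕜 := ℂ)
            (HD t + (α t : ℂ) • oracleHam inp h x) (φ x t)))
        (Set.Icc 0 T) t)
    (Γ : Matrix X X ℂ)
    (hΓΔ : ∀ j : Fin n, matOpNorm (Γ ⊙ Delta inp j) ≤ 1)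
    (v : X → ℂ) (hv : ∑ x, ‖v x‖ ^ 2 = 1) :
    ‖
      ((∑ x, ∑ y, (Γ x y * (starRingEnd ℂ) (v x) * v y) * (inner ℂ (φ x T) (φ y T) : ℂ))
        - (∑ x, ∑ y, (Γ x y * (starRingEnd ℂ) (v x) * v y) * (inner ℂ (φ x 0) (φ y 0) : ℂ)))‖
      ≤ 2 * T := by
  classical
  set f : ℝ → ℂ := fun t => ∑ x, ∑ y,
    (Γ x y * (starRingEnd ℂ) (v x) * v y) * (inner ℂ (φ x t) (φ y t) : ℂ) with hfdef
  set f' : ℝ → ℂ := fun t => Complex.I * (α t : ℂ) *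
    (∑ x, ∑ y, Γ x y *
      ((inner ℂ (v x • φ x t)
          (Matrix.toEuclideanCLM (𝕜 := ℂ) (oracleHam inp h x) (v y • φ y t)) : ℂ)
        - (inner ℂ (v x • φ x t)
          (Matrix.toEuclideanCLM (𝕜 := ℂ) (oracleHam inp h y) (v y • φ y t)) : ℂ)))
    with hf'def
  have hderiv : ∀ t ∈ Set.Icc 0 T, HasDerivWithinAt f (f' t) (Set.Icc 0 T) t := by
    intro t ht
    have hraw : HasDerivWithinAt f
        (∑ x, ∑ y, (Γ x y * (starRingEnd ℂ) (v x) * v y) *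
          ((inner ℂ (φ x t) ((-Complex.I) • (Matrix.toEuclideanCLM (𝕜 := ℂ)
              (HD t + (α t : ℂ) • oracleHam inp h y) (φ y t))) : ℂ)
           + (inner ℂ ((-Complex.I) • (Matrix.toEuclideanCLM (𝕜 := ℂ)
              (HD t + (α t : ℂ) • oracleHam inp h x) (φ x t))) (φ y t) : ℂ)))
        (Set.Icc 0 T) t := by
      rw [hfdef]
      refine HasDerivWithinAt.fun_sum fun x _ => HasDerivWithinAt.fun_sum fun y _ => ?_
      exact (HasDerivWithinAt.inner ℂ (hschro x t ht) (hschro y t ht)).const_mul _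
    have heq : (∑ x, ∑ y, (Γ x y * (starRingEnd ℂ) (v x) * v y) *
          ((inner ℂ (φ x t) ((-Complex.I) • (Matrix.toEuclideanCLM (𝕜 := ℂ)
              (HD t + (α t : ℂ) • oracleHam inp h y) (φ y t))) : ℂ)
           + (inner ℂ ((-Complex.I) • (Matrix.toEuclideanCLM (𝕜 := ℂ)
              (HD t + (α t : ℂ) • oracleHam inp h x) (φ x t))) (φ y t) : ℂ)))
        = f' t := by
      rw [hf'def]
      simp only [Finset.mul_sum]
      refine Finset.sum_congr rfl fun x _ => Finset.sum_congr rfl fun y _ => ?_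
      rw [per_pair inp h hherm (HD t) (hHDherm t) (α t) x y (φ x t) (φ y t)]
      simp only [map_smul, inner_smul_left, inner_smul_right, smul_eq_mul]
      ring
    exact heq ▸ hraw
  have hnormbound : ∀ t ∈ Set.Icc 0 T, ‖f' t‖ ≤ 2 := by
    intro t ht
    have hχ : ∑ x, ‖(v x • φ x t : EuclideanSpace ℂ (Fin n × Option Al × W))‖ ^ 2 = 1 := by
      rw [← hv]
      refine Finset.sum_congr rfl fun x _ => ?_
      rw [norm_smul, hunit x t ht, mul_one]
    have hbig := abs_bigsum_le inp h hherm hbnd Γ hΓΔ (fun x => v x • φ x t) hχ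
    rw [hf'def]
    rw [norm_mul, norm_mul]
    have h1 : ‖Complex.I‖ = 1 := Complex.norm_I
    have h2 : ‖((α t : ℝ) : ℂ)‖ ≤ 1 := by
      rw [Complex.norm_real, Real.norm_eq_abs]; exact hα t ht
    have h3 : ‖(∑ x, ∑ y, Γ x y *
        ((inner ℂ (v x • φ x t)
            (Matrix.toEuclideanCLM (𝕜 := ℂ) (oracleHam inp h x) (v y • φ y t)) : ℂ)
          - (inner ℂ (v x • φ x t)
            (Matrix.toEuclideanCLM (𝕜 := ℂ) (oracleHam inp h y) (v y • φ y t)) : ℂ)) : ℂ)‖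
        ≤ 2 := by simpa using hbig
    calc ‖Complex.I‖ * ‖((α t : ℝ) : ℂ)‖ * ‖(∑ x, ∑ y, _ : ℂ)‖
        ≤ 1 * 1 * 2 := by
          refine mul_le_mul ?_ h3 (norm_nonneg _) (by norm_num)
          refine mul_le_mul (le_of_eq h1) h2 (norm_nonneg _) zero_le_one
      _ = 2 := by norm_num
  have hmvt := (convex_Icc (0:ℝ) T).norm_image_sub_le_of_norm_hasDerivWithin_le
      hderiv hnormbound ⟨le_refl 0, hT⟩ ⟨hT, le_refl T⟩
  calc ‖f T - f 0‖ ≤ 2 * ‖T - 0‖ := hmvt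
    _ = 2 * T := by rw [sub_zero, Real.norm_eq_abs, abs_of_nonneg hT]
end analysis


/-- for any continuous-time query algorithm of duration `T`, any Hermitian
adversary matrix `Γ` with `‖Γ ∘ Δ_j‖ ≤ 1` for all `j`, and any unit vector `v`, the
initial and final Gram matrices `ρ` and `σ` satisfy `|⟨Γ∘(σ−ρ), vv*⟩| ≤ 2T`. -/
theorem stmt0
    {Al W : Type*} [Fintype Al] [DecidableEq Al] [Fintype W] [DecidableEq W]
    {n : ℕ} (hn : 0 < n)
    {X : Type*} [Fintype X] [DecidableEq X] (inp : X → Fin n → Al)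
    (T : ℝ) (hT : 0 ≤ T)
    (h : Al → Matrix (Option Al) (Option Al) ℂ)
    (hherm : ∀ y, (h y).IsHermitian) (hbound : ∀ y, matOpNorm (h y) ≤ 1)
    (HD : ℝ → Matrix (Fin n × Option Al × W) (Fin n × Option Al × W) ℂ)
    (hHDherm : ∀ t, (HD t).IsHermitian)
    (hHDcont : ∀ p q, Continuous fun t => HD t p q)
    (α : ℝ → ℝ) (hαcont : Continuous α) (hα : ∀ t ∈ Set.Icc 0 T, |α t| ≤ 1)
    (φ : X → ℝ → EuclideanSpace ℂ (Fin n × Option Al × W))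
    (hunit : ∀ x, ∀ t ∈ Set.Icc 0 T, ‖φ x t‖ = 1)
    (hschro : ∀ x, ∀ t ∈ Set.Icc 0 T,
      HasDerivWithinAt (φ x)
        ((-Complex.I) •
          (Matrix.toEuclideanCLM (𝕜 := ℂ)
            (HD t + (α t : ℂ) • oracleHam inp h x) (φ x t)))
        (Set.Icc 0 T) t)
    -- the initial and final Gram matrices
    (ρ σ : Matrix X X ℂ)
    (hρ : ∀ x y, ρ x y = inner ℂ (φ x 0) (φ y 0))
    (hσ : ∀ x y, σ x y = inner ℂ (φ x T) (φ y T)) :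
    ∀ Γ : Matrix X X ℂ, Γ.IsHermitian →
      (∀ j : Fin n, matOpNorm (Γ ⊙ Delta inp j) ≤ 1) →
      ∀ v : X → ℂ, (∑ x, ‖v x‖ ^ 2 = 1) →
        ‖((Γ ⊙ (σ - ρ)).conjTranspose * Matrix.vecMulVec v (star v)).trace‖
          ≤ 2 * T := by
  intro Γ hΓherm hΓΔ v hv
  have trace_eq : ((Γ ⊙ (σ - ρ)).conjTranspose * Matrix.vecMulVec v (star v)).trace
      = (∑ x, ∑ y, (Γ x y * (starRingEnd ℂ) (v x) * v y) * (inner ℂ (φ x T) (φ y T) : ℂ))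
        - (∑ x, ∑ y, (Γ x y * (starRingEnd ℂ) (v x) * v y) * (inner ℂ (φ x 0) (φ y 0) : ℂ)) := by
    rw [← Finset.sum_sub_distrib]
    rw [Matrix.trace]
    refine Finset.sum_congr rfl fun x _ => ?_
    rw [Matrix.diag_apply, Matrix.mul_apply, ← Finset.sum_sub_distrib]
    refine Finset.sum_congr rfl fun y _ => ?_
    have h1 : (starRingEnd ℂ) (Γ y x) = Γ x y := hΓherm.apply x y
    simp only [Matrix.conjTranspose_apply, Matrix.hadamard_apply, Matrix.sub_apply,
      Matrix.vecMulVec_apply, Pi.star_apply, hρ, hσ, star_mul', star_sub, inner_conj_symm,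
      RCLike.star_def, h1]
    ring
  rw [trace_eq]
  exact main_bound inp T hT h hherm hbound HD hHDherm α hα φ hunit hschro Γ hΓΔ v hv
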